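/- Let λ be a regular cardinal and F = {i_{αβ} : B_α → B_β : α ≤ β < λ} be a complete iteration system such that every antichain of C(F) has cardinality < λ (C(F) is <λ-cc). Then T(F) = C(F), i.e. every thread is a constant thread, and this partial order is a complete Boolean algebra. -/

import Mathlib

/-- A complete iteration system of complete Boolean algebras indexed by `ι`:
regular embeddings `emb : B a → B b` for `a ≤ b` (injective Boolean algebra
homomorphisms preserving arbitrary suprema) which commute and are the identity
on the diagonal. -/
structure IterSys (ι : Type*) [Preorder ι] where
  B : ι → Type
  cba : ∀ a, CompleteBooleanAlgebra (B a)
  emb : ∀ {a b : ι}, a ≤ b → B a → B b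
  emb_refl : ∀ (a : ι) (x : B a), emb (le_refl a) x = x
  emb_trans : ∀ {a b c : ι} (hab : a ≤ b) (hbc : b ≤ c) (x : B a),
    emb hbc (emb hab x) = emb (hab.trans hbc) x
  emb_inj : ∀ {a b : ι} (h : a ≤ b), Function.Injective (emb h)
  emb_sSup : ∀ {a b : ι} (h : a ≤ b) (S : Set (B a)), emb h (sSup S) = sSup (emb h '' S)
  emb_inf : ∀ {a b : ι} (h : a ≤ b) (x y : B a), emb h (x ⊓ y) = emb h x ⊓ emb h y
  emb_compl : ∀ {a b : ι} (h : a ≤ b) (x : B a), emb h xᶜ = (emb h x)ᶜ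
  emb_top : ∀ {a b : ι} (h : a ≤ b), emb h (⊤ : B a) = (⊤ : B b)

attribute [instance] IterSys.cba

namespace IterSys

variable {ι : Type*} [Preorder ι] (F : IterSys ι)

/-- The retraction `π_{a b}` associated to the regular embedding `i_{a b}`. -/
def ret {a b : ι} (h : a ≤ b) (c : F.B b) : F.B a :=
  sInf {x : F.B a | c ≤ F.emb h x}

/-- A thread of the iteration system (an element of the inverse limit `T(F)`). -/
def IsThread (f : ∀ a, F.B a) : Prop :=
  ∀ {a b : ι} (h : a ≤ b), F.ret h (f b) = f a

/-- A constant thread (an element of the direct limit `C(F)`). -/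
def IsConstThread (f : ∀ a, F.B a) : Prop :=
  F.IsThread f ∧ ∃ a : ι, ∀ (b : ι) (h : a ≤ b), f b = F.emb h (f a)

/-- The pointwise order on threads. -/
def ThreadLE (f g : ∀ a, F.B a) : Prop := ∀ a, f a ≤ g a

/-- A thread is nonzero if some (equivalently, cofinally many) of its coordinates
are nonzero. -/
def NonzeroThread (f : ∀ a, F.B a) : Prop := ∃ a, f a ≠ ⊥

/-- Two threads are compatible in `T(F)` if some nonzero thread lies below both. -/
def Compat (f g : ∀ a, F.B a) : Prop :=
  ∃ h, F.IsThread h ∧ F.NonzeroThread h ∧ F.ThreadLE h f ∧ F.ThreadLE h g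

/-- Two constant threads are compatible in `C(F)` if some nonzero constant thread
lies below both. -/
def ConstCompat (f g : ∀ a, F.B a) : Prop :=
  ∃ h, F.IsConstThread h ∧ F.NonzeroThread h ∧ F.ThreadLE h f ∧ F.ThreadLE h g

end IterSys


namespace IterSys

section Basic
variable {ι : Type*} [Preorder ι] (F : IterSys ι)

lemma emb_le_iff {a b : ι} (h : a ≤ b) {x y : F.B a} : F.emb h x ≤ F.emb h y ↔ x ≤ y := by
  constructor
  · intro hle
    have h1 : F.emb h (x ⊓ y) = F.emb h x := by
      rw [F.emb_inf]; exact inf_eq_left.mpr hle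
    exact inf_eq_left.mp (F.emb_inj h h1)
  · intro hle
    rw [← inf_eq_left, ← F.emb_inf, inf_eq_left.mpr hle]

lemma emb_bot {a b : ι} (h : a ≤ b) : F.emb h (⊥ : F.B a) = ⊥ := by
  rw [← compl_top, F.emb_compl, F.emb_top, compl_top]

lemma emb_sup {a b : ι} (h : a ≤ b) (x y : F.B a) :
    F.emb h (x ⊔ y) = F.emb h x ⊔ F.emb h y := by
  rw [← compl_compl (x ⊔ y), compl_sup, F.emb_compl, F.emb_inf, F.emb_compl, F.emb_compl,
    compl_inf, compl_compl, compl_compl]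

lemma le_emb_ret {a b : ι} (h : a ≤ b) (c : F.B b) : c ≤ F.emb h (F.ret h c) := by
  set z := F.emb h (F.ret h c) with hz
  have hbot : c ⊓ zᶜ = ⊥ := by
    rw [hz, ← F.emb_compl, ret, compl_sInf', F.emb_sSup, inf_sSup_eq]
    refine le_antisymm (iSup_le fun x => iSup_le fun hx => ?_) bot_le
    obtain ⟨y, hy, rfl⟩ := hx
    obtain ⟨u, hu, rfl⟩ := hy
    calc c ⊓ F.emb h uᶜ = c ⊓ (F.emb h u)ᶜ := by rw [F.emb_compl]
      _ ≤ F.emb h u ⊓ (F.emb h u)ᶜ := inf_le_inf_right _ hu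
      _ = ⊥ := inf_compl_eq_bot
  calc c = c ⊓ (z ⊔ zᶜ) := by rw [sup_compl_eq_top, inf_top_eq]
    _ = (c ⊓ z) ⊔ (c ⊓ zᶜ) := inf_sup_left _ _ _
    _ ≤ z := by rw [hbot, sup_bot_eq]; exact inf_le_right

lemma gc {a b : ι} (h : a ≤ b) : GaloisConnection (F.ret h) (F.emb h) := by
  intro c x
  constructor
  · intro hle; exact (F.le_emb_ret h c).trans ((F.emb_le_iff h).2 hle)
  · intro hle; exact sInf_le hle

lemma ret_emb {a b : ι} (h : a ≤ b) (x : F.B a) : F.ret h (F.emb h x) = x :=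
  le_antisymm ((F.gc h).l_le le_rfl) ((F.emb_le_iff h).1 (F.le_emb_ret h _))

lemma ret_mono {a b : ι} (h : a ≤ b) {x y : F.B b} (hxy : x ≤ y) :
    F.ret h x ≤ F.ret h y := (F.gc h).monotone_l hxy

lemma ret_bot {a b : ι} (h : a ≤ b) : F.ret h (⊥ : F.B b) = ⊥ := by
  rw [← F.emb_bot h, F.ret_emb]

lemma ret_top {a b : ι} (h : a ≤ b) : F.ret h (⊤ : F.B b) = ⊤ := by
  rw [← F.emb_top h, F.ret_emb]

lemma ret_sup {a b : ι} (h : a ≤ b) (x y : F.B b) :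
    F.ret h (x ⊔ y) = F.ret h x ⊔ F.ret h y := (F.gc h).l_sup

lemma ret_ret {a b c : ι} (hab : a ≤ b) (hbc : b ≤ c) (x : F.B c) :
    F.ret hab (F.ret hbc x) = F.ret (hab.trans hbc) x := by
  apply le_antisymm
  · refine (F.gc hab).l_le ((F.gc hbc).l_le ?_)
    rw [F.emb_trans hab hbc]
    exact F.le_emb_ret _ x
  · refine (F.gc (hab.trans hbc)).l_le ?_
    rw [← F.emb_trans hab hbc]
    exact (F.le_emb_ret hbc x).trans ((F.emb_le_iff hbc).2 (F.le_emb_ret hab _))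

lemma thread_le_emb {f : ∀ a, F.B a} (hf : F.IsThread f) {a b : ι} (h : a ≤ b) :
    f b ≤ F.emb h (f a) := by
  rw [← hf h]; exact F.le_emb_ret h (f b)

lemma thread_bot {f : ∀ a, F.B a} (hf : F.IsThread f) {a b : ι} (h : a ≤ b)
    (hb : f b = ⊥) : f a = ⊥ := by
  rw [← hf h, hb, F.ret_bot]

end Basic

section Linear
variable {ι : Type*} [LinearOrder ι] (F : IterSys ι)

/-- The constant thread generated by `x : F.B a`. -/
noncomputable def ct (a : ι) (x : F.B a) : ∀ b, F.B b := fun b =>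
  if h : a ≤ b then F.emb h x else F.ret (le_of_not_ge h) x

lemma ct_of_le {a b : ι} (h : a ≤ b) (x : F.B a) : F.ct a x b = F.emb h x := dif_pos h

lemma ct_self (a : ι) (x : F.B a) : F.ct a x a = x := by
  rw [F.ct_of_le le_rfl, F.emb_refl]

lemma ct_of_ge {a b : ι} (h : b ≤ a) (x : F.B a) : F.ct a x b = F.ret h x := by
  rcases eq_or_lt_of_le h with rfl | hlt
  · have h2 := F.ret_emb h x
    rw [F.emb_refl] at h2
    rw [F.ct_self, h2]
  · exact dif_neg (not_le.mpr hlt)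

lemma isThread_ct (a : ι) (x : F.B a) : F.IsThread (F.ct a x) := by
  intro b c hbc
  rcases le_total a b with hab | hba
  · rw [F.ct_of_le (hab.trans hbc), F.ct_of_le hab, ← F.emb_trans hab hbc, F.ret_emb]
  · rcases le_total a c with hac | hca
    · rw [F.ct_of_le hac, F.ct_of_ge hba, ← F.ret_ret hba hac, F.ret_emb]
    · rw [F.ct_of_ge hca, F.ct_of_ge hba, F.ret_ret]

lemma isConstThread_ct (a : ι) (x : F.B a) : F.IsConstThread (F.ct a x) :=
  ⟨F.isThread_ct a x, a, fun b h => by rw [F.ct_of_le h, F.ct_self]⟩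

end Linear

end IterSys


private lemma frame_aux {α : Type*} [CompleteLattice α] (cpl : α → α)
    (hinf : ∀ x, x ⊓ cpl x = ⊥) (hsup : ∀ x, x ⊔ cpl x = ⊤)
    (hdist : ∀ x y z : α, x ⊓ (y ⊔ z) ≤ (x ⊓ y) ⊔ (x ⊓ z))
    (a : α) (s : Set α) : a ⊓ sSup s ≤ ⨆ b ∈ s, a ⊓ b := by
  have h1 : sSup s ≤ (⨆ b ∈ s, a ⊓ b) ⊔ cpl a := by
    refine sSup_le fun b hb => ?_
    have h2 : b ⊓ (a ⊔ cpl a) ≤ (b ⊓ a) ⊔ (b ⊓ cpl a) := hdist b a (cpl a)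
    rw [hsup a, inf_top_eq] at h2
    refine h2.trans (sup_le_sup ?_ inf_le_right)
    rw [inf_comm]
    exact le_iSup₂ (f := fun b _ => a ⊓ b) b hb
  calc a ⊓ sSup s ≤ a ⊓ ((⨆ b ∈ s, a ⊓ b) ⊔ cpl a) := inf_le_inf_left a h1
    _ ≤ (a ⊓ (⨆ b ∈ s, a ⊓ b)) ⊔ (a ⊓ cpl a) := hdist _ _ _
    _ ≤ ⨆ b ∈ s, a ⊓ b := by rw [hinf a, sup_bot_eq]; exact inf_le_right

private lemma coframe_aux {α : Type*} [CompleteLattice α] (cpl : α → α)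
    (hinf : ∀ x, x ⊓ cpl x = ⊥) (hsup : ∀ x, x ⊔ cpl x = ⊤)
    (hdist : ∀ x y z : α, x ⊓ (y ⊔ z) ≤ (x ⊓ y) ⊔ (x ⊓ z))
    (a : α) (s : Set α) : ⨅ b ∈ s, a ⊔ b ≤ a ⊔ sInf s := by
  have h1 : (⨅ b ∈ s, a ⊔ b) ⊓ cpl a ≤ sInf s := by
    refine le_sInf fun b hb => ?_
    have h2 : (⨅ b ∈ s, a ⊔ b) ⊓ cpl a ≤ (a ⊔ b) ⊓ cpl a :=
      inf_le_inf_right _ (iInf₂_le b hb)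
    have h3 : cpl a ⊓ (a ⊔ b) ≤ (cpl a ⊓ a) ⊔ (cpl a ⊓ b) := hdist _ _ _
    rw [inf_comm (cpl a) a, hinf a, bot_sup_eq] at h3
    calc (⨅ b ∈ s, a ⊔ b) ⊓ cpl a ≤ (a ⊔ b) ⊓ cpl a := h2
      _ = cpl a ⊓ (a ⊔ b) := inf_comm _ _
      _ ≤ cpl a ⊓ b := h3
      _ ≤ b := inf_le_right
  have h4 : (⨅ b ∈ s, a ⊔ b) ≤ ((⨅ b ∈ s, a ⊔ b) ⊓ a) ⊔ ((⨅ b ∈ s, a ⊔ b) ⊓ cpl a) := by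
    have h5 := hdist (⨅ b ∈ s, a ⊔ b) a (cpl a)
    rwa [hsup a, inf_top_eq] at h5
  exact h4.trans (sup_le_sup inf_le_right h1)

/-- Let `λ` be a regular cardinal (realized as a well-order `ι` of
cardinality `κ` all of whose proper initial segments have size `< κ`, i.e. of order
type `κ`) and `F` a complete iteration system indexed by `ι` such that every
antichain of the direct limit `C(F)` has cardinality `< κ`.  Then every thread is a
constant thread, i.e. `T(F) = C(F)`, and this partial order (the set of threads with
the pointwise order) carries a complete Boolean algebra structure. -/

theorem stmt9 (ι : Type) [LinearOrder ι] [WellFoundedLT ι]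
    (κ : Cardinal) (hreg : κ.IsRegular)
    (hcard : Cardinal.mk ι = κ)
    (hinit : ∀ x : ι, Cardinal.mk {y : ι // y < x} < κ)
    (F : IterSys ι)
    (hcc : ∀ A : Set (∀ a, F.B a), (∀ f ∈ A, F.IsConstThread f) →
      (∀ f ∈ A, ∀ g ∈ A, f ≠ g → ¬ F.ConstCompat f g) → Cardinal.mk A < κ) :
    (∀ f : ∀ a, F.B a, F.IsThread f → F.IsConstThread f) ∧
    ∃ s : CompleteBooleanAlgebra {f : ∀ a, F.B a // F.IsThread f},
      ∀ x y : {f : ∀ a, F.B a // F.IsThread f},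
        s.le x y ↔ ∀ a, x.1 a ≤ y.1 a := by
  classical
  have haleph : Cardinal.aleph0 ≤ κ := hreg.aleph0_le
  -- an upper bound for small subsets of ι
  have hbound : ∀ T : Set ι, Cardinal.mk T < κ → ∃ x : ι, ∀ y ∈ T, y < x := by
    intro T hT
    by_contra hno
    push_neg at hno
    have hcover : (Set.univ : Set ι) ⊆ ⋃ y : T, Set.Iic (y : ι) := by
      intro x _
      obtain ⟨y, hy, hxy⟩ := hno x
      exact Set.mem_iUnion.2 ⟨⟨y, hy⟩, hxy⟩
    have h1 : Cardinal.mk ι ≤ Cardinal.sum (fun y : T => Cardinal.mk (Set.Iic (y : ι))) := by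
      calc Cardinal.mk ι = Cardinal.mk (Set.univ : Set ι) := Cardinal.mk_univ.symm
        _ ≤ Cardinal.mk (⋃ y : T, Set.Iic (y : ι)) := Cardinal.mk_le_mk_of_subset hcover
        _ ≤ _ := Cardinal.mk_iUnion_le_sum_mk
    have h2 : Cardinal.sum (fun y : T => Cardinal.mk (Set.Iic (y : ι))) < κ := by
      refine Cardinal.sum_lt_of_isRegular hreg hT fun y => ?_
      have h3 : Cardinal.mk (Set.Iic (y : ι)) ≤ Cardinal.mk (Set.Iio (y : ι)) + 1 := by
        rw [← Set.Iio_insert]; exact Cardinal.mk_insert_le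
      have h4 : Cardinal.mk (Set.Iio (y : ι)) < κ := hinit y
      exact h3.trans_lt (Cardinal.add_lt_of_lt haleph h4 (Cardinal.one_lt_aleph0.trans_le haleph))
    have := h1.trans_lt h2
    rw [hcard] at this
    exact lt_irrefl κ this
  -- Part 1 : every thread is a constant thread
  have hconst : ∀ f : ∀ a, F.B a, F.IsThread f → F.IsConstThread f := by
    intro f hf
    by_contra hnc
    have hsel : ∀ a : ι, ∃ b, ∃ h : a ≤ b, f b ≠ F.emb h (f a) := by
      by_contra hx
      push_neg at hx
      obtain ⟨a, ha⟩ := hx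
      exact hnc ⟨hf, a, fun b h => ha b h⟩
    choose g hg hne using hsel
    set d : ∀ a : ι, F.B (g a) := fun a => F.emb (hg a) (f a) ⊓ (f (g a))ᶜ with hd_def
    have hd : ∀ a, d a ≠ ⊥ := by
      intro a hbot
      apply hne a
      have h1 : F.emb (hg a) (f a) ≤ f (g a) := by
        exact disjoint_compl_right_iff.mp (disjoint_iff.mpr hbot)
      exact le_antisymm (F.thread_le_emb hf (hg a)) h1
    -- the constant threads generated by the `d a`
    set t : ι → ∀ b, F.B b := fun a => F.ct (g a) (d a) with ht_def
    have key : ∀ a a' : ι, (h : g a ≤ g a') → g a ≤ a' →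
        F.emb h (d a) ⊓ d a' = ⊥ := by
      intro a a' h haa'
      have h1 : F.emb h (d a) ≤ (F.emb h (f (g a)))ᶜ := by
        rw [← F.emb_compl]
        exact (F.emb_le_iff h).2 inf_le_right
      have h2 : d a' ≤ F.emb h (f (g a)) := by
        have h3 : d a' ≤ F.emb (hg a') (f a') := inf_le_left
        have h4 : f a' ≤ F.emb haa' (f (g a)) := F.thread_le_emb hf haa'
        have h5 : F.emb (hg a') (f a') ≤ F.emb (hg a') (F.emb haa' (f (g a))) :=
          (F.emb_le_iff (hg a')).2 h4
        rw [F.emb_trans haa' (hg a')] at h5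
        exact h3.trans h5
      refine le_bot_iff.mp ?_
      calc F.emb h (d a) ⊓ d a' ≤ (F.emb h (f (g a)))ᶜ ⊓ F.emb h (f (g a)) :=
            inf_le_inf h1 h2
        _ = ⊥ := compl_inf_eq_bot
    have hincomp : ∀ a a' : ι, g a ≤ a' → ¬ F.ConstCompat (t a) (t a') := by
      rintro a a' haa' ⟨p, ⟨hpt, -⟩, ⟨c, hc⟩, hp1, hp2⟩
      have hgaa' : g a ≤ g a' := haa'.trans (hg a')
      set c' := max c (g a') with hc'
      have hga : g a ≤ c' := hgaa'.trans (le_max_right c (g a'))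
      have hga' : g a' ≤ c' := le_max_right c (g a')
      have h1 : p c' ≤ F.emb hga (d a) :=
        (hp1 c').trans_eq (F.ct_of_le hga (d a))
      have h2 : p c' ≤ F.emb hga' (d a') :=
        (hp2 c').trans_eq (F.ct_of_le hga' (d a'))
      have h3 : p c' = ⊥ := by
        have h4 : p c' ≤ F.emb hga' (F.emb hgaa' (d a)) ⊓ F.emb hga' (d a') := by
          refine le_inf ?_ h2
          rw [F.emb_trans hgaa' hga']
          exact h1
        rw [← F.emb_inf, key a a' hgaa' haa', F.emb_bot] at h4
        exact le_bot_iff.mp h4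
      exact hc (F.thread_bot hpt (le_max_left c (g a')) h3)
    have hne_t : ∀ a a' : ι, g a ≤ a' → t a ≠ t a' := by
      intro a a' haa' heq
      have hgaa' : g a ≤ g a' := haa'.trans (hg a')
      have h1 : t a (g a') = F.emb hgaa' (d a) := F.ct_of_le hgaa' (d a)
      have h2 : t a' (g a') = d a' := F.ct_self (g a') (d a')
      have h3 : F.emb hgaa' (d a) = d a' := by rw [← h1, heq, h2]
      have h4 := key a a' hgaa' haa'
      rw [h3, inf_idem] at h4
      exact hd a' h4
    -- a maximal `g`-separated set, via Zorn's lemma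
    obtain ⟨S, hS⟩ := zorn_subset {S : Set ι | ∀ x ∈ S, ∀ y ∈ S, x < y → g x ≤ y}
      (by
        intro C hC hchain
        refine ⟨⋃₀ C, ?_, fun s hs => Set.subset_sUnion_of_mem hs⟩
        rintro x ⟨s, hs, hxs⟩ y ⟨s', hs', hys'⟩ hxy
        rcases hchain.total hs hs' with hss | hss
        · exact hC hs' x (hss hxs) y hys' hxy
        · exact hC hs x hxs y (hss hys') hxy)
    have hSsep := hS.prop
    -- S must have size at least κ
    have hSbig : ¬ Cardinal.mk S < κ := by
      intro hSlt
      have hT : Cardinal.mk (S ∪ g '' S : Set ι) < κ := by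
        refine lt_of_le_of_lt (Cardinal.mk_union_le S (g '' S)) ?_
        exact Cardinal.add_lt_of_lt haleph hSlt
          ((Cardinal.mk_image_le).trans_lt hSlt)
      obtain ⟨x, hx⟩ := hbound _ hT
      have hxS : x ∉ S := fun h => lt_irrefl x (hx x (Set.mem_union_left _ h))
      have hins : insert x S ∈ {S : Set ι | ∀ x ∈ S, ∀ y ∈ S, x < y → g x ≤ y} := by
        rintro u (rfl | hu) v (rfl | hv) huv
        · exact absurd huv (lt_irrefl _)
        · exact absurd (hx v (Set.mem_union_left _ hv)) (not_lt.mpr huv.le)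
        · exact le_of_lt (hx (g u) (Set.mem_union_right _ ⟨u, hu, rfl⟩))
        · exact hSsep u hu v hv huv
      have := hS.eq_of_subset hins (Set.subset_insert x S)
      exact hxS (this ▸ Set.mem_insert x S)
    -- the antichain
    have hinj : Set.InjOn t S := by
      intro a ha a' ha' heq
      by_contra hne'
      rcases lt_or_gt_of_ne hne' with h | h
      · exact hne_t a a' (hSsep a ha a' ha' h) heq
      · exact hne_t a' a (hSsep a' ha' a ha h) heq.symm
    have hccA := hcc (t '' S)
      (by rintro p ⟨a, -, rfl⟩; exact F.isConstThread_ct (g a) (d a))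
      (by
        rintro p ⟨a, ha, rfl⟩ q ⟨a', ha', rfl⟩ hpq
        have hne' : a ≠ a' := fun h => hpq (h ▸ rfl)
        rcases lt_or_gt_of_ne hne' with h | h
        · exact hincomp a a' (hSsep a ha a' ha' h)
        · intro hcompat
          refine hincomp a' a (hSsep a' ha' a ha h) ?_
          obtain ⟨p', h1, h2, h3, h4⟩ := hcompat
          exact ⟨p', h1, h2, h4, h3⟩)
    rw [Cardinal.mk_image_eq_of_injOn t S hinj] at hccA
    exact hSbig hccA
  refine ⟨hconst, ?_⟩

  -- Part 2 : the complete Boolean algebra structure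
  let sSupT : Set {f : ∀ a, F.B a // F.IsThread f} → {f : ∀ a, F.B a // F.IsThread f} :=
    fun S => ⟨fun a => ⨆ p : S, (p : {f : ∀ a, F.B a // F.IsThread f}).1 a, by
      intro a b h
      rw [(F.gc h).l_iSup]
      exact iSup_congr fun p => (p : {f : ∀ a, F.B a // F.IsThread f}).2 h⟩
  letI : SupSet {f : ∀ a, F.B a // F.IsThread f} := ⟨sSupT⟩
  have hisLUB : ∀ S : Set {f : ∀ a, F.B a // F.IsThread f}, IsLUB S (sSup S) := by
    intro S
    constructor
    · intro p hp
      show ∀ a, p.1 a ≤ (sSupT S).1 a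
      intro a
      exact le_iSup (fun q : S => (q : {f : ∀ a, F.B a // F.IsThread f}).1 a) ⟨p, hp⟩
    · intro q hq
      show ∀ a, (sSupT S).1 a ≤ q.1 a
      intro a
      exact iSup_le fun p => hq p.2 a
  letI L : CompleteLattice {f : ∀ a, F.B a // F.IsThread f} := completeLatticeOfSup _ hisLUB
  have hle : ∀ x y : {f : ∀ a, F.B a // F.IsThread f}, x ≤ y ↔ ∀ a, x.1 a ≤ y.1 a := fun _ _ => Iff.rfl
  choose w hw using fun x : {f : ∀ a, F.B a // F.IsThread f} => (hconst x.1 x.2).2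
  have hwmono : ∀ (x : {f : ∀ a, F.B a // F.IsThread f}) (a : ι), w x ≤ a →
      ∀ b (h : a ≤ b), x.1 b = F.emb h (x.1 a) := by
    intro x a ha b h
    rw [hw x b (ha.trans h), hw x a ha, F.emb_trans]
  have hcle : ∀ (x y : {f : ∀ a, F.B a // F.IsThread f}) (a : ι), x.1 a ≤ y.1 a →
      (∀ b (h : a ≤ b), x.1 b = F.emb h (x.1 a)) →
      (∀ b (h : a ≤ b), y.1 b = F.emb h (y.1 a)) → x ≤ y := by
    intro x y a hxy hcx hcy
    refine (hle x y).2 fun b => ?_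
    rcases le_total a b with h | h
    · rw [hcx b h, hcy b h]; exact (F.emb_le_iff h).2 hxy
    · rw [← x.2 h, ← y.2 h]; exact F.ret_mono h hxy
  let cT : ∀ a : ι, F.B a → {f : ∀ a, F.B a // F.IsThread f} := fun a x => ⟨F.ct a x, F.isThread_ct a x⟩
  have hcT : ∀ (a : ι) (x : F.B a) (b : ι) (h : a ≤ b),
      (cT a x).1 b = F.emb h ((cT a x).1 a) := by
    intro a x b h
    show F.ct a x b = F.emb h (F.ct a x a)
    rw [F.ct_self, F.ct_of_le h]
  have hconst_of_eq : ∀ (z : {f : ∀ a, F.B a // F.IsThread f}) (a : ι) (v : F.B a), z = cT a v →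
      ∀ b (h : a ≤ b), z.1 b = F.emb h (z.1 a) := by
    rintro z a v rfl; exact hcT a v
  have hcoord_of_eq : ∀ (z : {f : ∀ a, F.B a // F.IsThread f}) (a : ι) (v : F.B a), z = cT a v → z.1 a = v := by
    rintro z a v rfl; exact F.ct_self a v
  have hinf_eq : ∀ (x y : {f : ∀ a, F.B a // F.IsThread f}) (a : ι),
      (∀ b (h : a ≤ b), x.1 b = F.emb h (x.1 a)) →
      (∀ b (h : a ≤ b), y.1 b = F.emb h (y.1 a)) →
      x ⊓ y = cT a (x.1 a ⊓ y.1 a) := by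
    intro x y a hcx hcy
    apply le_antisymm
    · refine (hle _ _).2 fun b => ?_
      have hlx : (x ⊓ y).1 b ≤ x.1 b := (hle _ _).1 inf_le_left b
      have hly : (x ⊓ y).1 b ≤ y.1 b := (hle _ _).1 inf_le_right b
      rcases le_total a b with h | h
      · have h1 : (cT a (x.1 a ⊓ y.1 a)).1 b = F.emb h (x.1 a ⊓ y.1 a) := F.ct_of_le h _
        rw [h1, F.emb_inf]
        exact le_inf (hlx.trans_eq (hcx b h)) (hly.trans_eq (hcy b h))
      · have h1 : (cT a (x.1 a ⊓ y.1 a)).1 b = F.ret h (x.1 a ⊓ y.1 a) := F.ct_of_ge h _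
        have h2 : (x ⊓ y).1 b = F.ret h ((x ⊓ y).1 a) := ((x ⊓ y).2 h).symm
        rw [h1, h2]
        exact F.ret_mono h (le_inf ((hle _ _).1 inf_le_left a) ((hle _ _).1 inf_le_right a))
    · exact le_inf
        (hcle _ _ a ((F.ct_self a _).le.trans inf_le_left) (hcT a _) hcx)
        (hcle _ _ a ((F.ct_self a _).le.trans inf_le_right) (hcT a _) hcy)
  have hsup_eq : ∀ (x y : {f : ∀ a, F.B a // F.IsThread f}) (a : ι),
      (∀ b (h : a ≤ b), x.1 b = F.emb h (x.1 a)) →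
      (∀ b (h : a ≤ b), y.1 b = F.emb h (y.1 a)) →
      x ⊔ y = cT a (x.1 a ⊔ y.1 a) := by
    intro x y a hcx hcy
    apply le_antisymm
    · exact sup_le
        (hcle _ _ a (le_sup_left.trans (F.ct_self a _).ge) hcx (hcT a _))
        (hcle _ _ a (le_sup_right.trans (F.ct_self a _).ge) hcy (hcT a _))
    · refine (hle _ _).2 fun b => ?_
      rcases le_total a b with h | h
      · have h1 : (cT a (x.1 a ⊔ y.1 a)).1 b = F.emb h (x.1 a) ⊔ F.emb h (y.1 a) := by
          show F.ct a (x.1 a ⊔ y.1 a) b = _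
          rw [F.ct_of_le h, F.emb_sup]
        rw [h1, ← hcx b h, ← hcy b h]
        exact sup_le ((hle _ _).1 le_sup_left b) ((hle _ _).1 le_sup_right b)
      · have h1 : (cT a (x.1 a ⊔ y.1 a)).1 b = F.ret h (x.1 a) ⊔ F.ret h (y.1 a) := by
          show F.ct a (x.1 a ⊔ y.1 a) b = _
          rw [F.ct_of_ge h, F.ret_sup]
        rw [h1, x.2 h, y.2 h]
        exact sup_le ((hle _ _).1 le_sup_left b) ((hle _ _).1 le_sup_right b)
  have hdT : ∀ x y z : {f : ∀ a, F.B a // F.IsThread f}, x ⊓ (y ⊔ z) ≤ (x ⊓ y) ⊔ (x ⊓ z) := by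
    intro x y z
    set a := max (w x) (max (w y) (w z)) with ha
    have hcx := hwmono x a (le_max_left _ _)
    have hcy := hwmono y a ((le_max_left _ _).trans (le_max_right _ _))
    have hcz := hwmono z a ((le_max_right _ _).trans (le_max_right _ _))
    have e1 := hsup_eq y z a hcy hcz
    have e2 := hinf_eq x (y ⊔ z) a hcx (hconst_of_eq _ _ _ e1)
    have e3 := hinf_eq x y a hcx hcy
    have e4 := hinf_eq x z a hcx hcz
    have e5 := hsup_eq (x ⊓ y) (x ⊓ z) a (hconst_of_eq _ _ _ e3) (hconst_of_eq _ _ _ e4)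
    refine hcle _ _ a ?_ (hconst_of_eq _ _ _ e2) (hconst_of_eq _ _ _ e5)
    rw [hcoord_of_eq _ _ _ e2, hcoord_of_eq _ _ _ e5, hcoord_of_eq _ _ _ e1,
      hcoord_of_eq _ _ _ e3, hcoord_of_eq _ _ _ e4]
    exact (inf_sup_left _ _ _).le
  have hdT2 : ∀ x y z : {f : ∀ a, F.B a // F.IsThread f}, (x ⊔ y) ⊓ (x ⊔ z) ≤ x ⊔ (y ⊓ z) := by
    intro x y z
    set a := max (w x) (max (w y) (w z)) with ha
    have hcx := hwmono x a (le_max_left _ _)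
    have hcy := hwmono y a ((le_max_left _ _).trans (le_max_right _ _))
    have hcz := hwmono z a ((le_max_right _ _).trans (le_max_right _ _))
    have e1 := hsup_eq x y a hcx hcy
    have e2 := hsup_eq x z a hcx hcz
    have e3 := hinf_eq (x ⊔ y) (x ⊔ z) a (hconst_of_eq _ _ _ e1) (hconst_of_eq _ _ _ e2)
    have e4 := hinf_eq y z a hcy hcz
    have e5 := hsup_eq x (y ⊓ z) a hcx (hconst_of_eq _ _ _ e4)
    refine hcle _ _ a ?_ (hconst_of_eq _ _ _ e3) (hconst_of_eq _ _ _ e5)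
    rw [hcoord_of_eq _ _ _ e3, hcoord_of_eq _ _ _ e5, hcoord_of_eq _ _ _ e1,
      hcoord_of_eq _ _ _ e2, hcoord_of_eq _ _ _ e4]
    exact le_sup_inf
  have hbotT : ∀ a : ι, cT a ⊥ = (⊥ : {f : ∀ a, F.B a // F.IsThread f}) := by
    intro a
    refine le_antisymm ((hle _ _).2 fun b => ?_) bot_le
    have h1 : (cT a (⊥ : F.B a)).1 b = ⊥ := by
      show F.ct a ⊥ b = ⊥
      rcases le_total a b with h | h
      · rw [F.ct_of_le h, F.emb_bot]
      · rw [F.ct_of_ge h, F.ret_bot]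
    rw [h1]; exact bot_le
  have htopT : ∀ a : ι, cT a ⊤ = (⊤ : {f : ∀ a, F.B a // F.IsThread f}) := by
    intro a
    refine le_antisymm le_top ((hle _ _).2 fun b => ?_)
    have h1 : (cT a (⊤ : F.B a)).1 b = ⊤ := by
      show F.ct a ⊤ b = ⊤
      rcases le_total a b with h | h
      · rw [F.ct_of_le h, F.emb_top]
      · rw [F.ct_of_ge h, F.ret_top]
    rw [h1]; exact le_top
  let cpl : {f : ∀ a, F.B a // F.IsThread f} → {f : ∀ a, F.B a // F.IsThread f} := fun x => cT (w x) ((x.1 (w x))ᶜ)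
  have hcplc : ∀ x : {f : ∀ a, F.B a // F.IsThread f}, (cpl x).1 (w x) = (x.1 (w x))ᶜ := fun x => F.ct_self _ _
  have hic : ∀ x : {f : ∀ a, F.B a // F.IsThread f}, x ⊓ cpl x = ⊥ := by
    intro x
    have h1 := hinf_eq x (cpl x) (w x) (hw x) (hcT (w x) _)
    rw [h1, hcplc x, inf_compl_eq_bot, hbotT]
  have hsc : ∀ x : {f : ∀ a, F.B a // F.IsThread f}, x ⊔ cpl x = ⊤ := by
    intro x
    have h1 := hsup_eq x (cpl x) (w x) (hw x) (hcT (w x) _)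
    rw [h1, hcplc x, sup_compl_eq_top, htopT]
  refine ⟨{ L with
      compl := cpl
      le_sup_inf := hdT2
      inf_compl_le_bot := fun x => (hic x).le
      top_le_sup_compl := fun x => (hsc x).ge
      sdiff := fun x y => x ⊓ cpl y
      himp := fun x y => y ⊔ cpl x
      sdiff_eq := fun _ _ => rfl
      himp_eq := fun _ _ => rfl }, fun x y => Iff.rfl⟩
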